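/- arXiv:2006.04002 — 6 statements merged into one kernel-verified Lean document; each statement's English description precedes it below -/
import Mathlib

section
/- Let s₀ > 0 and let γ : ℝ → E be three times continuously differentiable on [0, s₀] with ‖γ'(t)‖ = 1 for all t ∈ [0, s₀] (a unit-speed curve). Then there exist a constant C > 0 and s₁ ∈ (0, s₀] such that for every s ∈ (0, s₁] one has γ(s) ≠ γ(0) and ‖γ'(0) − (γ(s) − γ(0))/‖γ(s) − γ(0)‖‖ ≤ (s/2)·‖γ''(0)‖ + C·s². (This is the paper's Proposition 3.1: the secant-line direction through γ(0) and γ(s) approximates the unit tangent vector γ'(0) with error (s/2)|γ''(0)| + O(s²).) -/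
open scoped RealInnerProductSpace

theorem secant_aux (n : ℕ) (s₀ : ℝ) (hs₀ : 0 < s₀)
    (γ γ' γ'' γ''' : ℝ → EuclideanSpace ℝ (Fin n))
    (hγ1 : ∀ t ∈ Set.Icc (0 : ℝ) s₀, HasDerivAt γ (γ' t) t)
    (hγ2 : ∀ t ∈ Set.Icc (0 : ℝ) s₀, HasDerivAt γ' (γ'' t) t)
    (hγ3 : ∀ t ∈ Set.Icc (0 : ℝ) s₀, HasDerivAt γ'' (γ''' t) t)
    (hγcont : ContinuousOn γ''' (Set.Icc (0 : ℝ) s₀))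
    (hunit : ∀ t ∈ Set.Icc (0 : ℝ) s₀, ‖γ' t‖ = 1) :
    ∃ C > (0 : ℝ), ∃ s₁ ∈ Set.Ioc (0 : ℝ) s₀, ∀ s ∈ Set.Ioc (0 : ℝ) s₁,
      γ s ≠ γ 0 ∧
      ‖γ' 0 - (‖γ s - γ 0‖)⁻¹ • (γ s - γ 0)‖ ≤ s / 2 * ‖γ'' 0‖ + C * s ^ 2 := by
  set I := Set.Icc (0 : ℝ) s₀ with hIdef
  have hI : UniqueDiffOn ℝ I := uniqueDiffOn_Icc hs₀
  have h0I : (0:ℝ) ∈ I := ⟨le_refl 0, hs₀.le⟩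
  -- derivWithin identifications
  have hd1 : ∀ t ∈ I, derivWithin γ I t = γ' t :=
    fun t ht => (hγ1 t ht).hasDerivWithinAt.derivWithin (hI t ht)
  have hd2 : ∀ t ∈ I, derivWithin γ' I t = γ'' t :=
    fun t ht => (hγ2 t ht).hasDerivWithinAt.derivWithin (hI t ht)
  have hd3 : ∀ t ∈ I, derivWithin γ'' I t = γ''' t :=
    fun t ht => (hγ3 t ht).hasDerivWithinAt.derivWithin (hI t ht)
  -- iterated derivatives
  have hit1 : ∀ t ∈ I, iteratedDerivWithin 1 γ I t = γ' t := by
    intro t ht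
    rw [iteratedDerivWithin_one]
    exact hd1 t ht
  have hit2 : ∀ t ∈ I, iteratedDerivWithin 2 γ I t = γ'' t := by
    intro t ht
    rw [show (2:ℕ) = 1 + 1 from rfl, iteratedDerivWithin_succ,
      derivWithin_congr hit1 (hit1 t ht)]
    exact hd2 t ht
  have hit3 : ∀ t ∈ I, iteratedDerivWithin 3 γ I t = γ''' t := by
    intro t ht
    rw [show (3:ℕ) = 2 + 1 from rfl, iteratedDerivWithin_succ,
      derivWithin_congr hit2 (hit2 t ht)]
    exact hd3 t ht
  -- smoothness
  have hc1 : ContDiffOn ℝ 1 γ'' I := by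
    rw [show (1 : WithTop ℕ∞) = 0 + 1 by norm_num, contDiffOn_succ_iff_derivWithin hI]
    refine ⟨fun t ht => (hγ3 t ht).hasDerivWithinAt.differentiableWithinAt, by simp, ?_⟩
    rw [contDiffOn_zero]
    exact hγcont.congr hd3
  have hc2 : ContDiffOn ℝ 2 γ' I := by
    rw [show (2 : WithTop ℕ∞) = 1 + 1 by norm_num, contDiffOn_succ_iff_derivWithin hI]
    exact ⟨fun t ht => (hγ2 t ht).hasDerivWithinAt.differentiableWithinAt, by simp,
      hc1.congr hd2⟩
  have hc3 : ContDiffOn ℝ 3 γ I := by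
    rw [show (3 : WithTop ℕ∞) = 2 + 1 by norm_num, contDiffOn_succ_iff_derivWithin hI]
    exact ⟨fun t ht => (hγ1 t ht).hasDerivWithinAt.differentiableWithinAt, by simp,
      hc2.congr hd1⟩
  -- bound on third derivative
  obtain ⟨M, hM⟩ := (isCompact_Icc (a := (0:ℝ)) (b := s₀)).exists_bound_of_continuousOn hγcont
  have hM0 : 0 ≤ M := le_trans (norm_nonneg _) (hM 0 h0I)
  -- Taylor polynomial
  have hPoly : ∀ s : ℝ, taylorWithinEval γ 2 I 0 s
      = γ 0 + s • γ' 0 + (2⁻¹ * s ^ 2) • γ'' 0 := by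
    intro s
    rw [taylor_within_apply, Finset.sum_range_succ, Finset.sum_range_succ,
      Finset.sum_range_one, iteratedDerivWithin_zero, hit1 0 h0I, hit2 0 h0I]
    norm_num [Nat.factorial]
  obtain ⟨M', hM'def⟩ : ∃ x : ℝ, x = M / 2 := ⟨_, rfl⟩
  have hM'0 : 0 ≤ M' := by rw [hM'def]; positivity
  have hRbound : ∀ s ∈ I, ‖γ s - (γ 0 + s • γ' 0 + (2⁻¹ * s ^ 2) • γ'' 0)‖ ≤ M' * s ^ 3 := by
    intro s hsI
    have h := taylor_mean_remainder_bound (n := 2) hs₀.le (by exact_mod_cast hc3) hsI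
      (fun y hy => by rw [show (2:ℕ)+1 = 3 from rfl, hit3 y hy]; exact hM y hy)
    rw [hPoly s] at h
    norm_num [Nat.factorial] at h
    rw [hM'def]
    linarith
  -- orthogonality
  have hu1 : ‖γ' 0‖ = 1 := hunit 0 h0I
  have horth : ⟪γ' 0, γ'' 0⟫ = 0 := by
    have hA : HasDerivWithinAt (fun t => ⟪γ' t, γ' t⟫)
        (⟪γ' 0, γ'' 0⟫ + ⟪γ'' 0, γ' 0⟫) I 0 :=
      HasDerivWithinAt.inner ℝ (hγ2 0 h0I).hasDerivWithinAt (hγ2 0 h0I).hasDerivWithinAt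
    have hone : ∀ t ∈ I, ⟪γ' t, γ' t⟫ = 1 := by
      intro t ht
      rw [real_inner_self_eq_norm_sq, hunit t ht]; norm_num
    have hB : HasDerivWithinAt (fun t => ⟪γ' t, γ' t⟫) 0 I 0 :=
      (hasDerivWithinAt_const 0 I (1:ℝ)).congr hone (hone 0 h0I)
    have e1 := hA.derivWithin (hI 0 h0I)
    have e2 := hB.derivWithin (hI 0 h0I)
    have hcomm := real_inner_comm (γ' 0) (γ'' 0)
    rw [e2] at e1
    linarith
  -- constants
  obtain ⟨K, hKdef⟩ : ∃ x : ℝ, x = ‖γ'' 0‖ / 2 + M' * s₀ := ⟨_, rfl⟩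
  have hK0 : 0 ≤ K := by rw [hKdef]; positivity
  obtain ⟨C, hCdef⟩ : ∃ x : ℝ, x = 3 * M' + K ^ 2 + 1 := ⟨_, rfl⟩
  have hC0 : 0 < C := by rw [hCdef]; positivity
  obtain ⟨δ, hδdef⟩ : ∃ x : ℝ, x = 1 / (2 * (K + 1)) := ⟨_, rfl⟩
  have hδ0 : 0 < δ := by rw [hδdef]; positivity
  refine ⟨C, hC0, min s₀ δ, ⟨lt_min hs₀ hδ0, min_le_left _ _⟩, ?_⟩
  intro s hs
  obtain ⟨hs0, hss₁⟩ := hs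
  have hss₀ : s ≤ s₀ := le_trans hss₁ (min_le_left _ _)
  have hsδ : s ≤ δ := le_trans hss₁ (min_le_right _ _)
  have hsI : s ∈ I := ⟨hs0.le, hss₀⟩
  have hsK : s * K ≤ 1 / 2 := by
    rw [hδdef] at hsδ
    have h2 : s * (2 * (K + 1)) ≤ 1 := by
      have := (le_div_iff₀ (by positivity : (0:ℝ) < 2 * (K + 1))).mp hsδ
      linarith
    nlinarith
  -- vectors
  obtain ⟨u, hu⟩ : ∃ x, x = γ' 0 := ⟨_, rfl⟩
  obtain ⟨wv, hwv⟩ : ∃ x, x = γ'' 0 := ⟨_, rfl⟩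
  obtain ⟨v, hvdef⟩ : ∃ x, x = γ s - γ 0 := ⟨_, rfl⟩
  rw [← hu, ← hwv, ← hvdef]
  have hu1' : ‖u‖ = 1 := by rw [hu]; exact hu1
  have horth' : ⟪u, wv⟫ = 0 := by rw [hu, hwv]; exact horth
  have hRb : ‖γ s - (γ 0 + s • u + (2⁻¹ * s ^ 2) • wv)‖ ≤ M' * s ^ 3 := by
    rw [hu, hwv]; exact hRbound s hsI
  obtain ⟨Rv, hRvdef⟩ : ∃ x, x = γ s - (γ 0 + s • u + (2⁻¹ * s ^ 2) • wv) := ⟨_, rfl⟩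
  obtain ⟨q, hqdef⟩ : ∃ x, x = (2⁻¹ * s ^ 2) • wv + Rv := ⟨_, rfl⟩
  have nR : ‖Rv‖ ≤ M' * s ^ 3 := by rw [hRvdef]; exact hRb
  have hvq : v = s • u + q := by rw [hvdef, hqdef, hRvdef, hu, hwv]; abel
  have nq : ‖q‖ ≤ s ^ 2 * K := by
    have h1 : ‖q‖ ≤ 2⁻¹ * s ^ 2 * ‖wv‖ + M' * s ^ 3 := by
      calc ‖q‖ ≤ ‖(2⁻¹ * s ^ 2) • wv‖ + ‖Rv‖ := by rw [hqdef]; exact norm_add_le _ _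
        _ = 2⁻¹ * s ^ 2 * ‖wv‖ + ‖Rv‖ := by
            rw [norm_smul, Real.norm_eq_abs, abs_of_nonneg (by positivity)]
        _ ≤ 2⁻¹ * s ^ 2 * ‖wv‖ + M' * s ^ 3 := by linarith
    rw [hKdef, ← hwv]
    nlinarith [mul_nonneg (mul_nonneg hM'0 (sq_nonneg s)) (sub_nonneg.mpr hss₀)]
  have huq : ⟪u, q⟫ = ⟪u, Rv⟫ := by
    rw [hqdef, inner_add_right, real_inner_smul_right, horth']; ring
  have habs : |⟪u, Rv⟫| ≤ M' * s ^ 3 := by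
    calc |⟪u, Rv⟫| ≤ ‖u‖ * ‖Rv‖ := abs_real_inner_le_norm u Rv
      _ = ‖Rv‖ := by rw [hu1', one_mul]
      _ ≤ M' * s ^ 3 := nR
  have hsu : ‖s • u‖ = s := by
    rw [norm_smul, Real.norm_eq_abs, abs_of_pos hs0, hu1', mul_one]
  have hv2 : ‖v‖ ^ 2 = s ^ 2 + 2 * (s * ⟪u, Rv⟫) + ‖q‖ ^ 2 := by
    rw [hvq, norm_add_sq_real, real_inner_smul_left, huq, hsu]
  -- lower bound on ‖v‖
  have hvlb : s / 2 ≤ ‖v‖ := by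
    have h1 : s ≤ ‖v‖ + ‖q‖ := by
      have hvq' : v - q = s • u := by rw [hvq]; abel
      have h := norm_sub_le v q
      rw [hvq', hsu] at h
      exact h
    have h4 : s ^ 2 * K ≤ s / 2 := by
      calc s ^ 2 * K = s * (s * K) := by ring
        _ ≤ s * (1 / 2) := mul_le_mul_of_nonneg_left hsK hs0.le
        _ = s / 2 := by ring
    linarith [h1, nq, h4]
  have hvpos : 0 < ‖v‖ := lt_of_lt_of_le (by positivity) hvlb
  have hvne : γ s ≠ γ 0 := by
    intro h
    rw [hvdef, h, sub_self, norm_zero] at hvpos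
    exact lt_irrefl 0 hvpos
  refine ⟨hvne, ?_⟩
  -- |‖v‖ - s| bound
  have habs' := abs_le.mp habs
  have hq2 : ‖q‖ ^ 2 ≤ K ^ 2 * s ^ 4 := by
    have h := mul_self_le_mul_self (norm_nonneg q) nq
    calc ‖q‖ ^ 2 = ‖q‖ * ‖q‖ := sq (‖q‖) ▸ by ring
      _ ≤ (s ^ 2 * K) * (s ^ 2 * K) := h
      _ = K ^ 2 * s ^ 4 := by ring
  have h2 : |‖v‖ ^ 2 - s ^ 2| ≤ (2 * M' + K ^ 2) * s ^ 4 := by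
    have hL : 0 ≤ s * (⟪u, Rv⟫ + M' * s ^ 3) :=
      mul_nonneg hs0.le (by linarith [habs'.1])
    have hU : 0 ≤ s * (M' * s ^ 3 - ⟪u, Rv⟫) :=
      mul_nonneg hs0.le (by linarith [habs'.2])
    have hK4 : 0 ≤ K ^ 2 * s ^ 4 := by positivity
    rw [abs_le]
    constructor
    · linarith [hv2, hL, sq_nonneg ‖q‖, hK4]
    · linarith [hv2, hq2, hU]
  have h3 : |‖v‖ - s| ≤ (2 * M' + K ^ 2) * s ^ 3 := by
    have he : |‖v‖ ^ 2 - s ^ 2| = |‖v‖ - s| * (‖v‖ + s) := by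
      rw [show ‖v‖ ^ 2 - s ^ 2 = (‖v‖ - s) * (‖v‖ + s) from by ring, abs_mul,
        abs_of_nonneg (by positivity : (0:ℝ) ≤ ‖v‖ + s)]
    have hfac : |‖v‖ - s| * s ≤ |‖v‖ ^ 2 - s ^ 2| := by
      rw [he]
      exact mul_le_mul_of_nonneg_left (by linarith [norm_nonneg v]) (abs_nonneg _)
    have : |‖v‖ - s| * s ≤ ((2 * M' + K ^ 2) * s ^ 3) * s := by linarith [hfac, h2]
    exact le_of_mul_le_mul_right this hs0
  -- final estimate
  have e1 : ‖u - s⁻¹ • v‖ = s⁻¹ * ‖q‖ := by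
    have h : u - s⁻¹ • v = (-(s⁻¹)) • q := by
      rw [hvq, smul_add, smul_smul, inv_mul_cancel₀ hs0.ne', one_smul, neg_smul]
      abel
    rw [h, norm_smul, Real.norm_eq_abs, abs_neg, abs_of_pos (inv_pos.mpr hs0)]
  have e2 : ‖s⁻¹ • v - ‖v‖⁻¹ • v‖ = |‖v‖ - s| / s := by
    rw [← sub_smul, norm_smul, Real.norm_eq_abs,
      show |s⁻¹ - ‖v‖⁻¹| * ‖v‖ = |(s⁻¹ - ‖v‖⁻¹) * ‖v‖| from by
        rw [abs_mul, abs_of_nonneg (norm_nonneg v)],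
      show (s⁻¹ - ‖v‖⁻¹) * ‖v‖ = (‖v‖ - s) / s from by
        field_simp [hs0.ne', hvpos.ne'],
      abs_div, abs_of_pos hs0]
  have t1 : s⁻¹ * ‖q‖ ≤ s / 2 * ‖wv‖ + M' * s ^ 2 := by
    rw [inv_mul_le_iff₀ hs0]
    calc ‖q‖ ≤ ‖(2⁻¹ * s ^ 2) • wv‖ + ‖Rv‖ := by rw [hqdef]; exact norm_add_le _ _
      _ = 2⁻¹ * s ^ 2 * ‖wv‖ + ‖Rv‖ := by
          rw [norm_smul, Real.norm_eq_abs, abs_of_nonneg (by positivity)]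
      _ ≤ 2⁻¹ * s ^ 2 * ‖wv‖ + M' * s ^ 3 := by linarith
      _ = s * (s / 2 * ‖wv‖ + M' * s ^ 2) := by ring
  have t2 : |‖v‖ - s| / s ≤ (2 * M' + K ^ 2) * s ^ 2 := by
    rw [div_le_iff₀ hs0]
    calc |‖v‖ - s| ≤ (2 * M' + K ^ 2) * s ^ 3 := h3
      _ = (2 * M' + K ^ 2) * s ^ 2 * s := by ring
  calc ‖u - ‖v‖⁻¹ • v‖ = ‖(u - s⁻¹ • v) + (s⁻¹ • v - ‖v‖⁻¹ • v)‖ := by rw [sub_add_sub_cancel]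
    _ ≤ ‖u - s⁻¹ • v‖ + ‖s⁻¹ • v - ‖v‖⁻¹ • v‖ := norm_add_le _ _
    _ = s⁻¹ * ‖q‖ + |‖v‖ - s| / s := by rw [e1, e2]
    _ ≤ (s / 2 * ‖wv‖ + M' * s ^ 2) + (2 * M' + K ^ 2) * s ^ 2 := add_le_add t1 t2
    _ ≤ s / 2 * ‖wv‖ + C * s ^ 2 := by rw [hCdef]; linarith [sq_nonneg s]


/-- Proposition 3.1 (secant-line approximation of the unit tangent vector):
for a unit-speed `C³` curve `γ` on `[0, s₀]`, there are `C > 0` and `s₁ ∈ (0, s₀]`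
such that for every `s ∈ (0, s₁]`, `γ s ≠ γ 0` and
`‖γ'(0) − (γ(s) − γ(0))/‖γ(s) − γ(0)‖‖ ≤ (s/2)‖γ''(0)‖ + C s²`. -/
theorem secant_line_tangent_estimate (n : ℕ) (s₀ : ℝ) (hs₀ : 0 < s₀)
    (γ γ' γ'' γ''' : ℝ → EuclideanSpace ℝ (Fin n))
    (hγ1 : ∀ t ∈ Set.Icc (0 : ℝ) s₀, HasDerivAt γ (γ' t) t)
    (hγ2 : ∀ t ∈ Set.Icc (0 : ℝ) s₀, HasDerivAt γ' (γ'' t) t)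
    (hγ3 : ∀ t ∈ Set.Icc (0 : ℝ) s₀, HasDerivAt γ'' (γ''' t) t)
    (hγcont : ContinuousOn γ''' (Set.Icc (0 : ℝ) s₀))
    (hunit : ∀ t ∈ Set.Icc (0 : ℝ) s₀, ‖γ' t‖ = 1) :
    ∃ C > (0 : ℝ), ∃ s₁ ∈ Set.Ioc (0 : ℝ) s₀, ∀ s ∈ Set.Ioc (0 : ℝ) s₁,
      γ s ≠ γ 0 ∧
      ‖γ' 0 - (‖γ s - γ 0‖)⁻¹ • (γ s - γ 0)‖ ≤ s / 2 * ‖γ'' 0‖ + C * s ^ 2 := by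
  exact secant_aux n s₀ hs₀ γ γ' γ'' γ''' hγ1 hγ2 hγ3 hγcont hunit
end

section
/- Let s₀ > 0 and let γ : ℝ → E be four times continuously differentiable on [0, s₀] with ‖γ'(t)‖ = 1 for all t ∈ [0, s₀] (a unit-speed curve). Then there exists a constant C > 0 such that for all s ∈ [0, s₀]: |‖γ(s) − γ(0)‖² − s² − s⁴·((1/4)·‖γ''(0)‖² + (1/3)·⟨γ'(0), γ'''(0)⟩)| ≤ C·s⁵. (This is the chord-length-squared expansion |γ(s) − γ(0)|² = s² + s⁴(¼|γ''(0)|² + ⅓⟨γ'(0), γ'''(0)⟩) + O(s⁵) established in the proof of Proposition 3.1.) -/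
open scoped RealInnerProductSpace

open Set
open scoped Nat

/-- Helper: identify `iteratedDerivWithin` along a chain of derivatives. -/
lemma iteratedDerivWithin_chain {S : Set ℝ} (hU : UniqueDiffOn ℝ S)
    {f0 f1 f2 f3 f4 : ℝ → ℝ}
    (h0 : ∀ t ∈ S, HasDerivAt f0 (f1 t) t)
    (h1 : ∀ t ∈ S, HasDerivAt f1 (f2 t) t)
    (h2 : ∀ t ∈ S, HasDerivAt f2 (f3 t) t)
    (h3 : ∀ t ∈ S, HasDerivAt f3 (f4 t) t) :
    (∀ t ∈ S, iteratedDerivWithin 1 f0 S t = f1 t) ∧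
    (∀ t ∈ S, iteratedDerivWithin 2 f0 S t = f2 t) ∧
    (∀ t ∈ S, iteratedDerivWithin 3 f0 S t = f3 t) ∧
    (∀ t ∈ S, iteratedDerivWithin 4 f0 S t = f4 t) := by
  have i1 : ∀ t ∈ S, iteratedDerivWithin 1 f0 S t = f1 t := by
    intro t ht
    rw [iteratedDerivWithin_one]
    exact (h0 t ht).hasDerivWithinAt.derivWithin (hU t ht)
  have i2 : ∀ t ∈ S, iteratedDerivWithin 2 f0 S t = f2 t := by
    intro t ht
    rw [show (2 : ℕ) = 1 + 1 from rfl, iteratedDerivWithin_succ,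
      derivWithin_congr (fun y hy => i1 y hy) (i1 t ht)]
    exact (h1 t ht).hasDerivWithinAt.derivWithin (hU t ht)
  have i3 : ∀ t ∈ S, iteratedDerivWithin 3 f0 S t = f3 t := by
    intro t ht
    rw [show (3 : ℕ) = 2 + 1 from rfl, iteratedDerivWithin_succ,
      derivWithin_congr (fun y hy => i2 y hy) (i2 t ht)]
    exact (h2 t ht).hasDerivWithinAt.derivWithin (hU t ht)
  have i4 : ∀ t ∈ S, iteratedDerivWithin 4 f0 S t = f4 t := by
    intro t ht
    rw [show (4 : ℕ) = 3 + 1 from rfl, iteratedDerivWithin_succ,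
      derivWithin_congr (fun y hy => i3 y hy) (i3 t ht)]
    exact (h3 t ht).hasDerivWithinAt.derivWithin (hU t ht)
  exact ⟨i1, i2, i3, i4⟩

/-- Helper: `C³` from a chain of derivatives with continuous top. -/
lemma contDiffOn_three_chain {S : Set ℝ} (hU : UniqueDiffOn ℝ S)
    {f0 f1 f2 f3 : ℝ → ℝ}
    (h0 : ∀ t ∈ S, HasDerivAt f0 (f1 t) t)
    (h1 : ∀ t ∈ S, HasDerivAt f1 (f2 t) t)
    (h2 : ∀ t ∈ S, HasDerivAt f2 (f3 t) t)
    (h3c : ContinuousOn f3 S) :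
    ContDiffOn ℝ 3 f0 S := by
  have e0 : ∀ t ∈ S, derivWithin f0 S t = f1 t := fun t ht =>
    (h0 t ht).hasDerivWithinAt.derivWithin (hU t ht)
  have e1 : ∀ t ∈ S, derivWithin f1 S t = f2 t := fun t ht =>
    (h1 t ht).hasDerivWithinAt.derivWithin (hU t ht)
  have e2 : ∀ t ∈ S, derivWithin f2 S t = f3 t := fun t ht =>
    (h2 t ht).hasDerivWithinAt.derivWithin (hU t ht)
  have c2 : ContDiffOn ℝ 1 f2 S := by
    rw [show ((1 : WithTop ℕ∞)) = 0 + 1 from rfl, contDiffOn_succ_iff_derivWithin hU]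
    refine ⟨fun t ht => ((h2 t ht).differentiableAt.differentiableWithinAt), by simp, ?_⟩
    rw [contDiffOn_zero]
    exact h3c.congr e2
  have c1 : ContDiffOn ℝ 2 f1 S := by
    rw [show ((2 : WithTop ℕ∞)) = 1 + 1 from rfl, contDiffOn_succ_iff_derivWithin hU]
    exact ⟨fun t ht => ((h1 t ht).differentiableAt.differentiableWithinAt), by simp,
      c2.congr e1⟩
  rw [show ((3 : WithTop ℕ∞)) = 2 + 1 from rfl, contDiffOn_succ_iff_derivWithin hU]
  exact ⟨fun t ht => ((h0 t ht).differentiableAt.differentiableWithinAt), by simp,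
    c1.congr e0⟩

/-- Chord-length-squared expansion from the proof of Proposition 3.1:
for a unit-speed `C⁴` curve `γ` on `[0, s₀]`,
`|‖γ(s) − γ(0)‖² − s² − s⁴(¼‖γ''(0)‖² + ⅓⟨γ'(0), γ'''(0)⟩)| ≤ C s⁵`. -/
theorem chord_length_squared_expansion (n : ℕ) (s₀ : ℝ) (hs₀ : 0 < s₀)
    (γ γ' γ'' γ''' γ'''' : ℝ → EuclideanSpace ℝ (Fin n))
    (hγ1 : ∀ t ∈ Set.Icc (0 : ℝ) s₀, HasDerivAt γ (γ' t) t)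
    (hγ2 : ∀ t ∈ Set.Icc (0 : ℝ) s₀, HasDerivAt γ' (γ'' t) t)
    (hγ3 : ∀ t ∈ Set.Icc (0 : ℝ) s₀, HasDerivAt γ'' (γ''' t) t)
    (hγ4 : ∀ t ∈ Set.Icc (0 : ℝ) s₀, HasDerivAt γ''' (γ'''' t) t)
    (hγcont : ContinuousOn γ'''' (Set.Icc (0 : ℝ) s₀))
    (hunit : ∀ t ∈ Set.Icc (0 : ℝ) s₀, ‖γ' t‖ = 1) :
    ∃ C > (0 : ℝ), ∀ s ∈ Set.Icc (0 : ℝ) s₀,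
      |‖γ s - γ 0‖ ^ 2 - s ^ 2 -
          s ^ 4 * ((1 / 4) * ‖γ'' 0‖ ^ 2 + (1 / 3) * ⟪γ' 0, γ''' 0⟫)| ≤ C * s ^ 5 := by
  set I : Set ℝ := Set.Icc (0 : ℝ) s₀ with hI
  have hUI : UniqueDiffOn ℝ I := uniqueDiffOn_Icc hs₀
  have h0I : (0 : ℝ) ∈ I := ⟨le_refl 0, hs₀.le⟩
  -- the four scalar functions
  set f0 : ℝ → ℝ := fun t => ⟪γ t - γ 0, γ t - γ 0⟫ with hf0
  set f1 : ℝ → ℝ := fun t => 2 * ⟪γ' t, γ t - γ 0⟫ with hf1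
  set f2 : ℝ → ℝ := fun t => 2 * ⟪γ'' t, γ t - γ 0⟫ + 2 * ⟪γ' t, γ' t⟫ with hf2
  set f3 : ℝ → ℝ := fun t => 2 * ⟪γ''' t, γ t - γ 0⟫ + 6 * ⟪γ'' t, γ' t⟫ with hf3
  set f4 : ℝ → ℝ := fun t =>
    2 * ⟪γ'''' t, γ t - γ 0⟫ + 8 * ⟪γ''' t, γ' t⟫ + 6 * ⟪γ'' t, γ'' t⟫ with hf4
  have hd0 : ∀ t ∈ I, HasDerivAt f0 (f1 t) t := by
    intro t ht
    have h := HasDerivAt.inner ℝ ((hγ1 t ht).sub_const (γ 0)) ((hγ1 t ht).sub_const (γ 0))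
    refine h.congr_deriv ?_
    rw [real_inner_comm (γ' t) (γ t - γ 0)]
    ring
  have hd1 : ∀ t ∈ I, HasDerivAt f1 (f2 t) t := by
    intro t ht
    have h := (HasDerivAt.inner ℝ (hγ2 t ht) ((hγ1 t ht).sub_const (γ 0))).const_mul (2 : ℝ)
    refine h.congr_deriv ?_
    ring
  have hd2 : ∀ t ∈ I, HasDerivAt f2 (f3 t) t := by
    intro t ht
    have ha := (HasDerivAt.inner ℝ (hγ3 t ht) ((hγ1 t ht).sub_const (γ 0))).const_mul (2 : ℝ)
    have hb := (HasDerivAt.inner ℝ (hγ2 t ht) (hγ2 t ht)).const_mul (2 : ℝ)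
    refine (ha.add hb).congr_deriv ?_
    rw [real_inner_comm (γ'' t) (γ' t)]
    ring
  have hd3 : ∀ t ∈ I, HasDerivAt f3 (f4 t) t := by
    intro t ht
    have ha := (HasDerivAt.inner ℝ (hγ4 t ht) ((hγ1 t ht).sub_const (γ 0))).const_mul (2 : ℝ)
    have hb := (HasDerivAt.inner ℝ (hγ3 t ht) (hγ2 t ht)).const_mul (6 : ℝ)
    refine (ha.add hb).congr_deriv ?_
    ring
  -- continuity of the curve derivatives
  have hc0 : ContinuousOn γ I := fun t ht => ((hγ1 t ht).continuousAt).continuousWithinAt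
  have hc1 : ContinuousOn γ' I := fun t ht => ((hγ2 t ht).continuousAt).continuousWithinAt
  have hc2 : ContinuousOn γ'' I := fun t ht => ((hγ3 t ht).continuousAt).continuousWithinAt
  have hc3 : ContinuousOn γ''' I := fun t ht => ((hγ4 t ht).continuousAt).continuousWithinAt
  -- orthogonality relations
  have hperp : ∀ t ∈ I, ⟪γ' t, γ'' t⟫ = 0 := by
    intro t ht
    have h1 : HasDerivWithinAt (fun u => ⟪γ' u, γ' u⟫)
        (⟪γ' t, γ'' t⟫ + ⟪γ'' t, γ' t⟫) I t :=
      (HasDerivAt.inner ℝ (hγ2 t ht) (hγ2 t ht)).hasDerivWithinAt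
    have h2 : HasDerivWithinAt (fun u => ⟪γ' u, γ' u⟫) 0 I t := by
      have : ∀ u ∈ I, ⟪γ' u, γ' u⟫ = (1 : ℝ) := by
        intro u hu
        rw [real_inner_self_eq_norm_sq, hunit u hu]; norm_num
      exact (hasDerivWithinAt_const t I (1 : ℝ)).congr this (this t ht)
    have := h1.derivWithin (hUI t ht) ▸ h2.derivWithin (hUI t ht)
    have heq : ⟪γ' t, γ'' t⟫ + ⟪γ'' t, γ' t⟫ = 0 := by
      rw [← h1.derivWithin (hUI t ht), h2.derivWithin (hUI t ht)]
    rw [real_inner_comm (γ'' t) (γ' t)] at heq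
    linarith
  have hkey : ⟪γ' 0, γ''' 0⟫ = -‖γ'' 0‖ ^ 2 := by
    have h1 : HasDerivWithinAt (fun u => ⟪γ' u, γ'' u⟫)
        (⟪γ' 0, γ''' 0⟫ + ⟪γ'' 0, γ'' 0⟫) I 0 :=
      (HasDerivAt.inner ℝ (hγ2 0 h0I) (hγ3 0 h0I)).hasDerivWithinAt
    have h2 : HasDerivWithinAt (fun u => ⟪γ' u, γ'' u⟫) 0 I 0 :=
      (hasDerivWithinAt_const 0 I (0 : ℝ)).congr (fun u hu => hperp u hu) (hperp 0 h0I)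
    have heq : ⟪γ' 0, γ''' 0⟫ + ⟪γ'' 0, γ'' 0⟫ = 0 := by
      rw [← h1.derivWithin (hUI 0 h0I), h2.derivWithin (hUI 0 h0I)]
    rw [real_inner_self_eq_norm_sq] at heq
    linarith
  -- bounds
  have hcompact : IsCompact I := isCompact_Icc
  obtain ⟨M, hM⟩ := hcompact.exists_bound_of_continuousOn hγcont
  have hM0 : 0 ≤ M := le_trans (norm_nonneg _) (hM 0 h0I)
  -- h = 8⟪γ''',γ'⟫ + 6⟪γ'',γ''⟫ is Lipschitz on I
  set g : ℝ → ℝ := fun t => 8 * ⟪γ''' t, γ' t⟫ + 6 * ⟪γ'' t, γ'' t⟫ with hg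
  set g' : ℝ → ℝ := fun t =>
    8 * (⟪γ''' t, γ'' t⟫ + ⟪γ'''' t, γ' t⟫) + 6 * (⟪γ'' t, γ''' t⟫ + ⟪γ''' t, γ'' t⟫) with hg'
  have hgd : ∀ t ∈ I, HasDerivAt g (g' t) t := by
    intro t ht
    exact ((HasDerivAt.inner ℝ (hγ4 t ht) (hγ2 t ht)).const_mul (8 : ℝ)).add
      ((HasDerivAt.inner ℝ (hγ3 t ht) (hγ3 t ht)).const_mul (6 : ℝ))
  have hg'cont : ContinuousOn g' I := by
    apply ContinuousOn.add
    · exact ((hc3.inner hc2).add (hγcont.inner hc1)).const_smul (8 : ℝ) |>.congr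
        (fun t ht => by simp [smul_eq_mul])
    · exact ((hc2.inner hc3).add (hc3.inner hc2)).const_smul (6 : ℝ) |>.congr
        (fun t ht => by simp [smul_eq_mul])
  obtain ⟨L, hL⟩ := hcompact.exists_bound_of_continuousOn hg'cont
  have hL0 : 0 ≤ L := le_trans (norm_nonneg _) (hL 0 h0I)
  have hglip : ∀ t ∈ I, |g t - g 0| ≤ L * t := by
    intro t ht
    have := Convex.norm_image_sub_le_of_norm_hasDerivWithin_le
      (f := g) (f' := g') (s := I)
      (fun x hx => (hgd x hx).hasDerivWithinAt) (fun x hx => hL x hx)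
      (convex_Icc _ _) h0I ht
    rw [Real.norm_eq_abs, Real.norm_eq_abs] at this
    calc |g t - g 0| ≤ L * |t - 0| := this
    _ = L * t := by rw [sub_zero, abs_of_nonneg ht.1]
  -- the curve is 1-Lipschitz
  have hcurve : ∀ t ∈ I, ‖γ t - γ 0‖ ≤ t := by
    intro t ht
    have := Convex.norm_image_sub_le_of_norm_hasDerivWithin_le
      (f := γ) (f' := γ') (s := I)
      (fun x hx => (hγ1 x hx).hasDerivWithinAt) (fun x hx => le_of_eq (hunit x hx))
      (convex_Icc _ _) h0I ht
    calc ‖γ t - γ 0‖ ≤ 1 * ‖t - 0‖ := this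
    _ = t := by rw [one_mul, sub_zero, Real.norm_eq_abs, abs_of_nonneg ht.1]
  -- Lipschitz bound on f4
  have hf4lip : ∀ t ∈ I, |f4 t - f4 0| ≤ (2 * M + L) * t := by
    intro t ht
    have e0 : f4 0 = g 0 := by
      simp only [hf4, hg, sub_self, inner_zero_right]; ring
    have e1 : f4 t = 2 * ⟪γ'''' t, γ t - γ 0⟫ + g t := by
      simp only [hf4, hg]; ring
    rw [e0, e1]
    have hb1 : |2 * ⟪γ'''' t, γ t - γ 0⟫| ≤ 2 * M * t := by
      rw [abs_mul, abs_two]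
      have := abs_real_inner_le_norm (γ'''' t) (γ t - γ 0)
      have h2 : ‖γ'''' t‖ * ‖γ t - γ 0‖ ≤ M * t :=
        mul_le_mul (hM t ht) (hcurve t ht) (norm_nonneg _) hM0
      nlinarith [abs_nonneg ⟪γ'''' t, γ t - γ 0⟫]
    calc |2 * ⟪γ'''' t, γ t - γ 0⟫ + g t - g 0|
        ≤ |2 * ⟪γ'''' t, γ t - γ 0⟫| + |g t - g 0| := by
          have := abs_add_le (2 * ⟪γ'''' t, γ t - γ 0⟫) (g t - g 0); rw [add_sub_assoc]; exact this
    _ ≤ 2 * M * t + L * t := add_le_add hb1 (hglip t ht)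
    _ = (2 * M + L) * t := by ring
  -- values at 0
  have v0 : f0 0 = 0 := by simp [hf0]
  have v1 : f1 0 = 0 := by simp [hf1]
  have v2 : f2 0 = 2 := by
    simp only [hf2, sub_self, inner_zero_right, real_inner_self_eq_norm_sq, hunit 0 h0I]
    norm_num
  have v3 : f3 0 = 0 := by
    have h := hperp 0 h0I
    rw [real_inner_comm (γ'' 0) (γ' 0)] at h
    simp only [hf3, sub_self, inner_zero_right, h]
    ring
  have v4 : f4 0 = 2 * ⟪γ' 0, γ''' 0⟫ := by
    have h : ⟪γ''' 0, γ' 0⟫ = -‖γ'' 0‖ ^ 2 := by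
      rw [real_inner_comm (γ' 0) (γ''' 0)]; exact hkey
    simp only [hf4, sub_self, inner_zero_right, real_inner_self_eq_norm_sq, h, hkey]
    ring
  -- the target coefficient
  set a : ℝ := (1 / 4) * ‖γ'' 0‖ ^ 2 + (1 / 3) * ⟪γ' 0, γ''' 0⟫ with ha
  have hacoeff : a = f4 0 / 24 := by
    rw [v4, ha, hkey]; ring
  refine ⟨(2 * M + L) / 24 + 1, by positivity, ?_⟩
  intro s hs
  rcases eq_or_lt_of_le hs.1 with hs0 | hs0
  · rw [← hs0]
    simp
  -- main case 0 < s
  have hSsub : Set.Icc (0 : ℝ) s ⊆ I := Set.Icc_subset_Icc le_rfl hs.2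
  set S : Set ℝ := Set.Icc (0 : ℝ) s with hS
  have hUS : UniqueDiffOn ℝ S := uniqueDiffOn_Icc hs0
  obtain ⟨i1, i2, i3, i4⟩ := iteratedDerivWithin_chain hUS
    (fun t ht => hd0 t (hSsub ht)) (fun t ht => hd1 t (hSsub ht))
    (fun t ht => hd2 t (hSsub ht)) (fun t ht => hd3 t (hSsub ht))
  have h0S : (0 : ℝ) ∈ S := ⟨le_refl 0, hs0.le⟩
  have hcd : ContDiffOn ℝ 3 f0 S :=
    contDiffOn_three_chain hUS (fun t ht => hd0 t (hSsub ht)) (fun t ht => hd1 t (hSsub ht))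
      (fun t ht => hd2 t (hSsub ht))
      (fun t ht => ((hd3 t (hSsub ht)).continuousAt).continuousWithinAt)
  have hdiff : DifferentiableOn ℝ (iteratedDerivWithin 3 f0 S) (Set.Ioo 0 s) := by
    intro t ht
    have htS : t ∈ S := Set.Ioo_subset_Icc_self ht
    have : DifferentiableWithinAt ℝ f3 (Set.Ioo 0 s) t :=
      ((hd3 t (hSsub htS)).differentiableAt).differentiableWithinAt
    exact this.congr (fun y hy => i3 y (Set.Ioo_subset_Icc_self hy)) (i3 t htS)
  have hIcc : Set.uIcc 0 s = S := Set.uIcc_of_le hs0.le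
  have hIoo : Set.uIoo 0 s = Set.Ioo 0 s := Set.uIoo_of_le hs0.le
  obtain ⟨x', hx', htaylor⟩ := taylor_mean_remainder_lagrange (n := 3) hs0.ne
    (hIcc ▸ hcd) (by rw [hIcc, hIoo]; exact hdiff)
  rw [hIcc] at htaylor
  rw [hIoo] at hx'
  -- compute the Taylor polynomial
  have htp : taylorWithinEval f0 3 S 0 s = s ^ 2 := by
    rw [taylor_within_apply]
    have e0 : iteratedDerivWithin 0 f0 S 0 = 0 := by rw [iteratedDerivWithin_zero]; exact v0
    have e1 : iteratedDerivWithin 1 f0 S 0 = 0 := by rw [i1 0 h0S]; exact v1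
    have e2 : iteratedDerivWithin 2 f0 S 0 = 2 := by rw [i2 0 h0S]; exact v2
    have e3 : iteratedDerivWithin 3 f0 S 0 = 0 := by rw [i3 0 h0S]; exact v3
    rw [Finset.sum_range_succ, Finset.sum_range_succ, Finset.sum_range_succ,
      Finset.sum_range_one, e0, e1, e2, e3]
    simp [Nat.factorial]
    ring
  have hx'S : x' ∈ S := Set.Ioo_subset_Icc_self hx'
  rw [htp, i4 x' hx'S] at htaylor
  -- final computation
  have hnorm : ‖γ s - γ 0‖ ^ 2 = f0 s := (real_inner_self_eq_norm_sq (γ s - γ 0)).symm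
  have hfinal : ‖γ s - γ 0‖ ^ 2 - s ^ 2 - s ^ 4 * a = (f4 x' - f4 0) * s ^ 4 / 24 := by
    rw [hnorm, hacoeff]
    have : f0 s - s ^ 2 = f4 x' * (s - 0) ^ 4 / (4 : ℕ)! := htaylor
    rw [sub_zero] at this
    have h24 : ((4 : ℕ)! : ℝ) = 24 := by norm_num [Nat.factorial]
    rw [h24] at this
    linear_combination this
  rw [hfinal]
  have hb : |f4 x' - f4 0| ≤ (2 * M + L) * s := by
    calc |f4 x' - f4 0| ≤ (2 * M + L) * x' := hf4lip x' (hSsub hx'S)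
    _ ≤ (2 * M + L) * s := by
        apply mul_le_mul_of_nonneg_left hx'.2.le (by positivity)
  calc |(f4 x' - f4 0) * s ^ 4 / 24| = |f4 x' - f4 0| * s ^ 4 / 24 := by
        rw [abs_div, abs_mul, abs_pow, abs_of_nonneg hs.1]
        norm_num
  _ ≤ ((2 * M + L) * s) * s ^ 4 / 24 := by
        apply div_le_div_of_nonneg_right ?_ (by norm_num)
        exact mul_le_mul_of_nonneg_right hb (by positivity)
  _ = ((2 * M + L) / 24) * s ^ 5 := by ring
  _ ≤ ((2 * M + L) / 24 + 1) * s ^ 5 := by nlinarith [pow_pos hs0 5]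
end

section
/- Let s₀ > 0 and let γ : ℝ → E be three times continuously differentiable on [0, s₀] with ‖γ'(t)‖ = 1 for all t ∈ [0, s₀] (a unit-speed curve). Then there exist a constant C > 0 and s₁ ∈ (0, s₀] such that for every s ∈ (0, s₁]: γ(s) ≠ γ(0) and ‖(γ(s) − γ(0))/‖γ(s) − γ(0)‖ − γ'(0) − (s/2)·γ''(0)‖ ≤ C·s². (The normalized secant direction expansion (γ(s) − γ(0))/|γ(s) − γ(0)| = γ'(0) + (s/2)γ''(0) + O(s²) from the proof of Proposition 3.1.) -/
open Set

set_option maxHeartbeats 1000000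

/-- Normalized secant direction expansion from the proof of Proposition 3.1:
for a unit-speed `C³` curve `γ`, there are `C > 0` and `s₁ ∈ (0, s₀]` such that
for `s ∈ (0, s₁]`, `γ s ≠ γ 0` and
`‖(γ(s) − γ(0))/‖γ(s) − γ(0)‖ − γ'(0) − (s/2)γ''(0)‖ ≤ C s²`. -/
theorem normalized_secant_expansion (n : ℕ) (s₀ : ℝ) (hs₀ : 0 < s₀)
    (γ γ' γ'' γ''' : ℝ → EuclideanSpace ℝ (Fin n))
    (hγ1 : ∀ t ∈ Set.Icc (0 : ℝ) s₀, HasDerivAt γ (γ' t) t)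
    (hγ2 : ∀ t ∈ Set.Icc (0 : ℝ) s₀, HasDerivAt γ' (γ'' t) t)
    (hγ3 : ∀ t ∈ Set.Icc (0 : ℝ) s₀, HasDerivAt γ'' (γ''' t) t)
    (hγcont : ContinuousOn γ''' (Set.Icc (0 : ℝ) s₀))
    (hunit : ∀ t ∈ Set.Icc (0 : ℝ) s₀, ‖γ' t‖ = 1) :
    ∃ C > (0 : ℝ), ∃ s₁ ∈ Set.Ioc (0 : ℝ) s₀, ∀ s ∈ Set.Ioc (0 : ℝ) s₁,
      γ s ≠ γ 0 ∧
      ‖(‖γ s - γ 0‖)⁻¹ • (γ s - γ 0) - γ' 0 - (s / 2) • γ'' 0‖ ≤ C * s ^ 2 := by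
  have h0mem : (0 : ℝ) ∈ Icc (0 : ℝ) s₀ := ⟨le_refl _, hs₀.le⟩
  -- a bound on γ'''
  obtain ⟨M0, hM0⟩ := isCompact_Icc.exists_bound_of_continuousOn hγcont
  set M : ℝ := max M0 1 with hMdef
  have hM1 : (1 : ℝ) ≤ M := le_max_right _ _
  have hMpos : (0 : ℝ) < M := lt_of_lt_of_le one_pos hM1
  have hMb : ∀ t ∈ Icc (0 : ℝ) s₀, ‖γ''' t‖ ≤ M :=
    fun t ht => (hM0 t ht).trans (le_max_left _ _)
  -- step 1 : ‖γ'' t - γ'' 0‖ ≤ M t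
  have h2 : ∀ t ∈ Icc (0 : ℝ) s₀, ‖γ'' t - γ'' 0‖ ≤ M * t := by
    refine image_norm_le_of_norm_deriv_right_le_deriv_boundary
      (f := fun t => γ'' t - γ'' 0) (f' := γ''')
      (B := fun t => M * t) (B' := fun _ => M) ?_ ?_ ?_ ?_ ?_
    · exact fun t ht => ((hγ3 t ht).continuousAt.continuousWithinAt).sub continuousWithinAt_const
    · intro x hx
      simpa using ((hγ3 x (Ico_subset_Icc_self hx)).sub_const (γ'' 0)).hasDerivWithinAt
    · simp
    · intro x; simpa using (hasDerivAt_id x).const_mul M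
    · exact fun x hx => hMb x (Ico_subset_Icc_self hx)
  -- step 2 : ‖γ' t - γ' 0 - t γ'' 0‖ ≤ M t²/2
  have h1 : ∀ t ∈ Icc (0 : ℝ) s₀, ‖γ' t - γ' 0 - t • γ'' 0‖ ≤ M * t ^ 2 / 2 := by
    refine image_norm_le_of_norm_deriv_right_le_deriv_boundary
      (f := fun t => γ' t - γ' 0 - t • γ'' 0) (f' := fun t => γ'' t - γ'' 0)
      (B := fun t => M * t ^ 2 / 2) (B' := fun t => M * t) ?_ ?_ ?_ ?_ ?_
    · intro t ht
      exact (((hγ2 t ht).continuousAt.continuousWithinAt).sub continuousWithinAt_const).sub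
        ((continuousWithinAt_id.smul continuousWithinAt_const))
    · intro x hx
      have hd : HasDerivAt (fun t : ℝ => γ' t - γ' 0 - t • γ'' 0) (γ'' x - γ'' 0) x := by
        have := ((hγ2 x (Ico_subset_Icc_self hx)).sub_const (γ' 0)).sub
          ((hasDerivAt_id x).smul_const (γ'' 0))
        simpa [Pi.sub_def] using this
      exact hd.hasDerivWithinAt
    · simp
    · intro x
      have : HasDerivAt (fun t : ℝ => M * t ^ 2 / 2) (M * (2 * x ^ 1) / 2) x :=
        ((hasDerivAt_pow 2 x).const_mul M).div_const 2
      simpa using this.congr_deriv (by ring)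
    · exact fun x hx => h2 x (Ico_subset_Icc_self hx)
  -- step 3 : ‖γ t - γ 0 - t γ' 0 - (t²/2) γ'' 0‖ ≤ M t³/6
  have h0 : ∀ t ∈ Icc (0 : ℝ) s₀,
      ‖γ t - γ 0 - t • γ' 0 - (t ^ 2 / 2) • γ'' 0‖ ≤ M * t ^ 3 / 6 := by
    refine image_norm_le_of_norm_deriv_right_le_deriv_boundary
      (f := fun t => γ t - γ 0 - t • γ' 0 - (t ^ 2 / 2) • γ'' 0)
      (f' := fun t => γ' t - γ' 0 - t • γ'' 0)
      (B := fun t => M * t ^ 3 / 6) (B' := fun t => M * t ^ 2 / 2) ?_ ?_ ?_ ?_ ?_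
    · intro t ht
      exact ((((hγ1 t ht).continuousAt.continuousWithinAt).sub continuousWithinAt_const).sub
        (continuousWithinAt_id.smul continuousWithinAt_const)).sub
        (((continuousWithinAt_id.pow 2).div_const 2).smul continuousWithinAt_const)
    · intro x hx
      have hd : HasDerivAt (fun t : ℝ => γ t - γ 0 - t • γ' 0 - (t ^ 2 / 2) • γ'' 0)
          (γ' x - γ' 0 - x • γ'' 0) x := by
        have hsq : HasDerivAt (fun t : ℝ => t ^ 2 / 2) x x := by
          have := (hasDerivAt_pow 2 x).div_const 2
          simpa using this.congr_deriv (by ring)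
        have := (((hγ1 x (Ico_subset_Icc_self hx)).sub_const (γ 0)).sub
          ((hasDerivAt_id x).smul_const (γ' 0))).sub (hsq.smul_const (γ'' 0))
        simpa [Pi.sub_def] using this
      exact hd.hasDerivWithinAt
    · simp
    · intro x
      have : HasDerivAt (fun t : ℝ => M * t ^ 3 / 6) (M * (3 * x ^ 2) / 6) x :=
        ((hasDerivAt_pow 3 x).const_mul M).div_const 6
      simpa using this.congr_deriv (by ring)
    · exact fun x hx => h1 x (Ico_subset_Icc_self hx)
  -- orthogonality ⟪γ' 0, γ'' 0⟫ = 0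
  have horth : inner ℝ (γ' 0) (γ'' 0) = (0 : ℝ) := by
    have hud : UniqueDiffWithinAt ℝ (Icc (0 : ℝ) s₀) 0 :=
      uniqueDiffOn_Icc hs₀ 0 h0mem
    have hdi : HasDerivWithinAt (fun t => (inner ℝ (γ' t) (γ' t) : ℝ))
        (inner ℝ (γ' 0) (γ'' 0) + inner ℝ (γ'' 0) (γ' 0)) (Icc (0 : ℝ) s₀) 0 :=
      (hγ2 0 h0mem).hasDerivWithinAt.inner ℝ (hγ2 0 h0mem).hasDerivWithinAt
    have hconst : HasDerivWithinAt (fun t => (inner ℝ (γ' t) (γ' t) : ℝ)) 0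
        (Icc (0 : ℝ) s₀) 0 := by
      refine (hasDerivWithinAt_const _ _ (1 : ℝ)).congr ?_ ?_
      · intro t ht
        rw [real_inner_self_eq_norm_sq, hunit t ht]; norm_num
      · rw [real_inner_self_eq_norm_sq, hunit 0 h0mem]; norm_num
    have hsum : inner ℝ (γ' 0) (γ'' 0) + inner ℝ (γ'' 0) (γ' 0) = (0 : ℝ) :=
      (hdi.derivWithin hud).symm.trans (hconst.derivWithin hud)
    have hcomm : (inner ℝ (γ'' 0) (γ' 0) : ℝ) = inner ℝ (γ' 0) (γ'' 0) :=
      real_inner_comm _ _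
    rw [hcomm] at hsum
    linarith
  -- notation
  set K : ℝ := ‖γ'' 0‖ with hK
  have hKnn : 0 ≤ K := norm_nonneg _
  set C₁ : ℝ := K ^ 2 / 4 + 2 * (1 + K / 2) * (M / 6) + (M / 6) ^ 2 with hC₁
  have hC₁nn : 0 ≤ C₁ := by rw [hC₁]; positivity
  set C : ℝ := C₁ + M / 6 + 1 with hC
  have hCpos : 0 < C := by rw [hC]; positivity
  clear_value M K C₁ C
  refine ⟨C, hCpos, min s₀ (1 / (2 * (K + M + 1))), ⟨lt_min hs₀ (by positivity), min_le_left _ _⟩,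
    ?_⟩
  intro s hs
  obtain ⟨hspos, hsle⟩ := hs
  have hss₀ : s ∈ Icc (0 : ℝ) s₀ := ⟨hspos.le, hsle.trans (min_le_left _ _)⟩
  have hsmall : s ≤ 1 / (2 * (K + M + 1)) := hsle.trans (min_le_right _ _)
  have hs1 : s ≤ 1 := by
    have h2' : (1 : ℝ) / (2 * (K + M + 1)) ≤ 1 := by
      rw [div_le_one (by positivity)]
      nlinarith
    exact hsmall.trans h2'
  -- definitions
  set u := γ s - γ 0 with hu
  set w := γ' 0 + (s / 2) • γ'' 0 with hw
  set R := γ s - γ 0 - s • γ' 0 - (s ^ 2 / 2) • γ'' 0 with hR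
  have hRle : ‖R‖ ≤ M * s ^ 3 / 6 := h0 s hss₀
  have huw : u = s • w + R := by
    rw [hu, hw, hR, smul_add, smul_smul]
    have : s * (s / 2) = s ^ 2 / 2 := by ring
    rw [this]
    abel
  set v := s⁻¹ • u with hv
  clear_value u w R v
  have hvw : v - w = s⁻¹ • R := by
    rw [hv, huw, smul_add, smul_smul, inv_mul_cancel₀ hspos.ne', one_smul]
    abel
  have hvwle : ‖v - w‖ ≤ M / 6 * s ^ 2 := by
    rw [hvw, norm_smul, norm_inv, Real.norm_of_nonneg hspos.le, inv_mul_le_iff₀ hspos]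
    calc ‖R‖ ≤ M * s ^ 3 / 6 := hRle
      _ = s * (M / 6 * s ^ 2) := by ring
  -- ‖w‖² = 1 + s²/4 K²
  have hg1 : ‖γ' 0‖ = 1 := hunit 0 h0mem
  have hw2 : ‖w‖ ^ 2 = 1 + s ^ 2 / 4 * K ^ 2 := by
    rw [hw, @norm_add_sq_real, hg1, real_inner_smul_right, horth, norm_smul,
      Real.norm_of_nonneg (by positivity : (0:ℝ) ≤ s / 2), ← hK]
    ring
  have hwle : ‖w‖ ≤ 1 + K / 2 := by
    calc ‖w‖ = ‖γ' 0 + (s / 2) • γ'' 0‖ := by rw [hw]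
      _ ≤ ‖γ' 0‖ + ‖(s / 2) • γ'' 0‖ := norm_add_le _ _
      _ = 1 + s / 2 * K := by
          rw [hg1, norm_smul, Real.norm_of_nonneg (by positivity : (0:ℝ) ≤ s / 2), ← hK]
      _ ≤ 1 + K / 2 := by nlinarith
  -- ‖v‖² close to 1
  have hv2 : ‖v‖ ^ 2 = ‖w‖ ^ 2 + 2 * inner ℝ w (v - w) + ‖v - w‖ ^ 2 := by
    have hvdecomp : v = w + (v - w) := by abel
    conv_lhs => rw [hvdecomp]
    rw [@norm_add_sq_real]
  have hinner : |(inner ℝ w (v - w) : ℝ)| ≤ ‖w‖ * ‖v - w‖ := abs_real_inner_le_norm _ _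
  have hv2close : |‖v‖ ^ 2 - 1| ≤ C₁ * s ^ 2 := by
    have hvw2 : ‖v - w‖ ^ 2 ≤ (M / 6) ^ 2 * s ^ 2 := by
      calc ‖v - w‖ ^ 2 ≤ (M / 6 * s ^ 2) ^ 2 := pow_le_pow_left₀ (norm_nonneg _) hvwle 2
        _ = (M / 6) ^ 2 * s ^ 2 * s ^ 2 := by ring
        _ ≤ (M / 6) ^ 2 * s ^ 2 * 1 := by
            have hs2 : s ^ 2 ≤ 1 := by nlinarith
            have hnn : (0:ℝ) ≤ (M / 6) ^ 2 * s ^ 2 := by positivity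
            nlinarith [mul_le_mul_of_nonneg_left hs2 hnn]
        _ = (M / 6) ^ 2 * s ^ 2 := by ring
    have hinb : |(inner ℝ w (v - w) : ℝ)| ≤ (1 + K / 2) * (M / 6 * s ^ 2) := by
      calc |(inner ℝ w (v - w) : ℝ)| ≤ ‖w‖ * ‖v - w‖ := hinner
        _ ≤ (1 + K / 2) * (M / 6 * s ^ 2) :=
            mul_le_mul hwle hvwle (norm_nonneg _) (by positivity)
    have habs := abs_le.mp hinb
    rw [hv2, hw2, hC₁, abs_le]
    constructor
    · nlinarith [sq_nonneg ‖v - w‖, sq_nonneg s, sq_nonneg K]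
    · nlinarith [sq_nonneg s]
  have hvnorm_close : |‖v‖ - 1| ≤ C₁ * s ^ 2 := by
    have hfac : |‖v‖ - 1| * (‖v‖ + 1) = |‖v‖ ^ 2 - 1| := by
      rw [← abs_of_nonneg (by positivity : (0:ℝ) ≤ ‖v‖ + 1), ← abs_mul]
      congr 1; ring
    nlinarith [abs_nonneg (‖v‖ - 1), norm_nonneg v, hv2close,
      mul_nonneg (abs_nonneg (‖v‖ - 1)) (norm_nonneg v)]
  -- v is not small
  have hvlb : (1 : ℝ) / 2 ≤ ‖v‖ := by
    have hvg : ‖v - γ' 0‖ ≤ s / 2 * K + M / 6 * s ^ 2 := by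
      calc ‖v - γ' 0‖ = ‖(v - w) + (s / 2) • γ'' 0‖ := by rw [hw]; congr 1; abel
        _ ≤ ‖v - w‖ + ‖(s / 2) • γ'' 0‖ := norm_add_le _ _
        _ ≤ M / 6 * s ^ 2 + s / 2 * K := by
            rw [norm_smul, Real.norm_of_nonneg (by positivity : (0:ℝ) ≤ s / 2), ← hK]
            linarith [hvwle]
        _ = s / 2 * K + M / 6 * s ^ 2 := by ring
    have hsm : s * (2 * (K + M + 1)) ≤ 1 := by
      rw [← le_div_iff₀ (by positivity)]; exact hsmall
    have hhalf : s / 2 * K + M / 6 * s ^ 2 ≤ 1 / 2 := by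
      nlinarith [mul_nonneg hspos.le hKnn, mul_nonneg hMpos.le hspos.le,
        mul_le_mul_of_nonneg_left hs1 (mul_nonneg hMpos.le hspos.le)]
    have h4 := norm_sub_norm_le (γ' 0) v
    rw [hg1, norm_sub_rev] at h4
    linarith [hvg.trans hhalf]
  have hvpos : (0 : ℝ) < ‖v‖ := by linarith
  have huv : u = s • v := by
    rw [hv, smul_smul, mul_inv_cancel₀ hspos.ne', one_smul]
  have hunorm : ‖u‖ = s * ‖v‖ := by
    rw [huv, norm_smul, Real.norm_of_nonneg hspos.le]
  have hupos : 0 < ‖u‖ := by rw [hunorm]; positivity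
  constructor
  · have hne : u ≠ 0 := norm_pos_iff.mp hupos
    rw [hu] at hne
    exact sub_ne_zero.mp hne
  · have hnorm_eq : (‖u‖)⁻¹ • u = ‖v‖⁻¹ • v := by
      rw [hunorm, huv, mul_inv, smul_smul, mul_comm (s⁻¹) (‖v‖⁻¹), mul_assoc,
        inv_mul_cancel₀ hspos.ne', mul_one]
    have hexpr : (‖u‖)⁻¹ • u - γ' 0 - (s / 2) • γ'' 0 = (‖v‖⁻¹ • v - v) + (v - w) := by
      rw [hnorm_eq, hw]; abel
    rw [hexpr]
    have hA : ‖‖v‖⁻¹ • v - v‖ = |1 - ‖v‖| := by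
      have h5 : ‖v‖⁻¹ • v - v = (‖v‖⁻¹ - 1) • v := by rw [sub_smul, one_smul]
      rw [h5, norm_smul, Real.norm_eq_abs, ← abs_of_nonneg (norm_nonneg v), ← abs_mul]
      congr 1
      field_simp
      rw [abs_norm]; ring
    calc ‖(‖v‖⁻¹ • v - v) + (v - w)‖ ≤ ‖‖v‖⁻¹ • v - v‖ + ‖v - w‖ := norm_add_le _ _
      _ ≤ C₁ * s ^ 2 + M / 6 * s ^ 2 := by
          rw [hA, abs_sub_comm]
          exact add_le_add hvnorm_close hvwle
      _ ≤ C * s ^ 2 := by rw [hC]; nlinarith [sq_nonneg s]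
end

section
/- Fix an integer K ≥ 1 and let F : Matrix (Fin K) (Fin K) ℝ be defined by F i j = (i − j + 1)·(i − j + 2)/2 if i ≥ j and F i j = 0 otherwise (indices 0, …, K−1, with i − j computed in ℤ). Then for each row i, the sum ∑_j |F i j| = (i+1)·(i+2)·(i+3)/6, and consequently the maximum absolute row sum (the ∞-operator norm of F) equals K·(K+1)·(K+2)/6, attained at the last row i = K−1. (This is the claim ‖E₀⁻¹‖_∞ = K(K+1)(K+2)/6 in Appendix B of the paper, where F = E₀⁻¹.) -/
lemma aux2 (n : ℕ) : ∑ j ∈ Finset.range (n+1), ((j:ℝ)+1)*((j:ℝ)+2)/2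
    = ((n:ℝ)+1)*((n:ℝ)+2)*((n:ℝ)+3)/6 := by
  induction n with
  | zero => norm_num
  | succ n ih =>
    rw [Finset.sum_range_succ, ih]
    push_cast
    ring

lemma aux1 (n : ℕ) : ∑ j ∈ Finset.range (n+1), ((n:ℝ)-(j:ℝ)+1)*((n:ℝ)-(j:ℝ)+2)/2
    = ((n:ℝ)+1)*((n:ℝ)+2)*((n:ℝ)+3)/6 := by
  rw [← aux2 n, ← Finset.sum_range_reflect (fun j => ((j:ℝ)+1)*((j:ℝ)+2)/2) (n+1)]
  apply Finset.sum_congr rfl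
  intro j hj
  have hj' : j ≤ n := by simpa [Nat.lt_succ_iff] using hj
  have : ((n + 1 - 1 - j : ℕ) : ℝ) = (n:ℝ) - (j:ℝ) := by
    push_cast [Nat.cast_sub hj']
    ring
  rw [this]

/-- Appendix B of the paper: `‖E₀⁻¹‖_∞ = K(K+1)(K+2)/6`. Each row sum of absolute
values of `F = E₀⁻¹` equals `(i+1)(i+2)(i+3)/6`, the maximum row sum equals
`K(K+1)(K+2)/6`, and it is attained at the last row `i = K−1`. -/
theorem extrapolation_matrix_inverse_norm (K : ℕ) (hK : 1 ≤ K)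
    (F : Matrix (Fin K) (Fin K) ℝ)
    (hF : ∀ i j : Fin K, F i j =
      if (j : ℕ) ≤ (i : ℕ) then
        (((i : ℕ) : ℝ) - ((j : ℕ) : ℝ) + 1) * (((i : ℕ) : ℝ) - ((j : ℕ) : ℝ) + 2) / 2
      else 0) :
    (∀ i : Fin K, ∑ j, |F i j| =
        (((i : ℕ) : ℝ) + 1) * (((i : ℕ) : ℝ) + 2) * (((i : ℕ) : ℝ) + 3) / 6) ∧
    (∑ j, |F (⟨K - 1, by omega⟩ : Fin K) j| = (K : ℝ) * ((K : ℝ) + 1) * ((K : ℝ) + 2) / 6) ∧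
    (∀ i : Fin K, ∑ j, |F i j| ≤ (K : ℝ) * ((K : ℝ) + 1) * ((K : ℝ) + 2) / 6) := by
  have key : ∀ i : Fin K, ∑ j, |F i j| =
      (((i : ℕ) : ℝ) + 1) * (((i : ℕ) : ℝ) + 2) * (((i : ℕ) : ℝ) + 3) / 6 := by
    intro i
    have habs : ∀ j : Fin K, |F i j| =
        if (j : ℕ) ≤ (i : ℕ) then
          (((i : ℕ) : ℝ) - ((j : ℕ) : ℝ) + 1) * (((i : ℕ) : ℝ) - ((j : ℕ) : ℝ) + 2) / 2
        else 0 := by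
      intro j
      rw [hF i j]
      split_ifs with h
      · have h1 : ((j : ℕ) : ℝ) ≤ ((i : ℕ) : ℝ) := by exact_mod_cast h
        apply abs_of_nonneg
        nlinarith [h1]
      · simp
    calc ∑ j, |F i j|
        = ∑ j ∈ Finset.range K, (if j ≤ (i : ℕ) then
            (((i : ℕ) : ℝ) - (j : ℝ) + 1) * (((i : ℕ) : ℝ) - (j : ℝ) + 2) / 2 else 0) := by
          simp_rw [habs]
          exact Fin.sum_univ_eq_sum_range (fun j => if j ≤ (i : ℕ) then
            (((i : ℕ) : ℝ) - (j : ℝ) + 1) * (((i : ℕ) : ℝ) - (j : ℝ) + 2) / 2 else 0) K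
      _ = ∑ j ∈ Finset.range ((i : ℕ) + 1), (if j ≤ (i : ℕ) then
            (((i : ℕ) : ℝ) - (j : ℝ) + 1) * (((i : ℕ) : ℝ) - (j : ℝ) + 2) / 2 else 0) := by
          refine (Finset.sum_subset ?_ ?_).symm
          · intro x hx
            simp only [Finset.mem_range] at *
            omega
          · intro x _ hx
            simp only [Finset.mem_range, Nat.lt_succ_iff, not_le] at hx
            rw [if_neg (by omega)]
      _ = ∑ j ∈ Finset.range ((i : ℕ) + 1),
            (((i : ℕ) : ℝ) - (j : ℝ) + 1) * (((i : ℕ) : ℝ) - (j : ℝ) + 2) / 2 := by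
          apply Finset.sum_congr rfl
          intro j hj
          rw [if_pos (by simpa [Nat.lt_succ_iff] using hj)]
      _ = _ := aux1 (i : ℕ)
  have hlast : ((⟨K - 1, by omega⟩ : Fin K) : ℕ) = K - 1 := rfl
  refine ⟨key, ?_, ?_⟩
  · rw [key]
    rw [hlast]
    have : ((K - 1 : ℕ) : ℝ) = (K : ℝ) - 1 := by
      push_cast [Nat.cast_sub hK]; ring
    rw [this]; ring
  · intro i
    rw [key]
    have hi : ((i : ℕ) : ℝ) + 1 ≤ (K : ℝ) := by exact_mod_cast i.isLt
    have h0 : (0:ℝ) ≤ ((i : ℕ) : ℝ) := Nat.cast_nonneg _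
    have hK0 : (0:ℝ) ≤ (K:ℝ) := Nat.cast_nonneg _
    have h2 : (((i : ℕ) : ℝ) + 1) * (((i : ℕ) : ℝ) + 2) ≤ (K:ℝ) * ((K:ℝ) + 1) :=
      mul_le_mul hi (by linarith) (by linarith) hK0
    have h3 : (((i : ℕ) : ℝ) + 1) * (((i : ℕ) : ℝ) + 2) * (((i : ℕ) : ℝ) + 3)
        ≤ (K:ℝ) * ((K:ℝ) + 1) * ((K:ℝ) + 2) :=
      mul_le_mul h2 (by linarith) (by linarith) (by nlinarith)
    linarith
end

section
/- Let x, y, ỹ ∈ E and ε > 0, and set t := (2·‖x − y‖·‖y − ỹ‖ + ‖y − ỹ‖²)/(4ε). Then |exp(−‖x − ỹ‖²/(4ε)) − exp(−‖x − y‖²/(4ε))| ≤ exp(−‖x − y‖²/(4ε))·(exp(t) − 1). In particular, if ‖y − ỹ‖ ≤ c·h·√ε and ‖x − y‖ ≤ c·h, then the Gaussian kernel evaluated at the perturbed point ỹ equals the kernel at y up to a multiplicative factor 1 + O(h²·ε^{−1/2}). (This is the Gaussian kernel perturbation estimate K^h_{ij} = K_{ij}·(1 + O(h²ε^{−1/2}))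 established in the proof of Lemma C.3 of the paper.) -/
lemma abs_exp_sub_one_le_of_abs_le {s t : ℝ} (h : |s| ≤ t) :
    |Real.exp s - 1| ≤ Real.exp t - 1 := by
  have h1 : s ≤ t := le_trans (le_abs_self s) h
  have h2 : -t ≤ s := neg_le_of_abs_le h
  rcases le_or_gt 0 (Real.exp s - 1) with hs | hs
  · rw [abs_of_nonneg hs]
    have := Real.exp_le_exp.2 h1; linarith
  · rw [abs_of_neg hs]
    have h3 : Real.exp (-t) ≤ Real.exp s := Real.exp_le_exp.2 h2
    have h4 : t + 1 ≤ Real.exp t := Real.add_one_le_exp t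
    have h5 : -t + 1 ≤ Real.exp (-t) := Real.add_one_le_exp (-t)
    linarith

/-- Gaussian kernel perturbation estimate from the proof of Lemma C.3:
with `t = (2‖x−y‖‖y−ỹ‖ + ‖y−ỹ‖²)/(4ε)`,
`|exp(−‖x−ỹ‖²/(4ε)) − exp(−‖x−y‖²/(4ε))| ≤ exp(−‖x−y‖²/(4ε))(exp(t) − 1)`. -/
theorem gaussian_kernel_perturbation (n : ℕ) (x y y' : EuclideanSpace ℝ (Fin n))
    (ε : ℝ) (hε : 0 < ε) :
    |Real.exp (-‖x - y'‖ ^ 2 / (4 * ε)) - Real.exp (-‖x - y‖ ^ 2 / (4 * ε))| ≤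
      Real.exp (-‖x - y‖ ^ 2 / (4 * ε)) *
        (Real.exp ((2 * ‖x - y‖ * ‖y - y'‖ + ‖y - y'‖ ^ 2) / (4 * ε)) - 1) := by
  set a := ‖x - y‖ with ha
  set b := ‖y - y'‖ with hb
  set c := ‖x - y'‖ with hc
  have ha0 : 0 ≤ a := norm_nonneg _
  have hb0 : 0 ≤ b := norm_nonneg _
  have hc0 : 0 ≤ c := norm_nonneg _
  have htri1 : c ≤ a + b := by
    have := norm_sub_le_norm_sub_add_norm_sub x y y'
    simpa [← ha, ← hb, ← hc] using this
  have htri2 : a ≤ c + b := by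
    have := norm_sub_le_norm_sub_add_norm_sub x y' y
    have hsym : ‖y' - y‖ = b := by rw [hb, norm_sub_rev]
    simpa [← ha, ← hc, hsym] using this
  have hsq : |c ^ 2 - a ^ 2| ≤ 2 * a * b + b ^ 2 := by
    rw [abs_le]; constructor <;> nlinarith
  set s : ℝ := a ^ 2 / (4 * ε) - c ^ 2 / (4 * ε) with hs
  have habs : |s| ≤ (2 * a * b + b ^ 2) / (4 * ε) := by
    rw [hs, div_sub_div_same, abs_div, abs_of_pos (by linarith : (0:ℝ) < 4 * ε)]
    exact div_le_div_of_nonneg_right (by rwa [abs_sub_comm]) (by linarith) |>.trans_eq rfl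
  have key := abs_exp_sub_one_le_of_abs_le habs
  have hrw : Real.exp (-c ^ 2 / (4 * ε)) - Real.exp (-a ^ 2 / (4 * ε)) =
      Real.exp (-a ^ 2 / (4 * ε)) * (Real.exp s - 1) := by
    rw [mul_sub, mul_one, ← Real.exp_add, hs]; ring_nf
  rw [hrw, abs_mul, abs_of_pos (Real.exp_pos _)]
  exact mul_le_mul_of_nonneg_left key (Real.exp_pos _).le
end

section
/- Let N ∈ ℕ, let I ⊆ Fin N with I ≠ Fin N (the 'interior' index set, whose complement is the 'boundary'), and let M : Matrix (Fin N) (Fin N) ℝ satisfy, for every i ∈ I: (a) ∑_{j} M i j = 0 (the full row sum over all N columns vanishes), (b) M i i < 0, and (c) M i j > 0 for all j ≠ i. Let v : Fin N → ℝ satisfy ∑_{j ∈ I} M i j · v j > 0 for every i ∈ I. Then for any i ∈ I at which v attains its global maximum (i.e. v j ≤ v i for all j ∈ Fin N), one has v i < 0. In particular, if v has a nonnegative global maximum, then every global maximizer of v lies in the boundary set (Fin N) \ I. (This is the discrete maximum principle for the GPDM matrix established in Appendix B of the paper, used to prove convergence of the Dirichlet problem in Theorem 4.1.) -/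
/-- Discrete maximum principle for the GPDM matrix (Appendix B, used in Theorem 4.1):
if the interior rows of `M` have zero full row sum, negative diagonal and positive
off-diagonal entries, and `∑_{j ∈ I} M i j · v j > 0` on interior rows, then any
interior global maximizer of `v` has `v i < 0`; in particular any global maximizer
with nonnegative value lies in the boundary set. -/
theorem discrete_maximum_principle (N : ℕ) (I : Finset (Fin N)) (hI : I ≠ Finset.univ)
    (M : Matrix (Fin N) (Fin N) ℝ)
    (hrow : ∀ i ∈ I, ∑ j, M i j = 0)
    (hdiag : ∀ i ∈ I, M i i < 0)
    (hoff : ∀ i ∈ I, ∀ j, j ≠ i → 0 < M i j)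
    (v : Fin N → ℝ)
    (hv : ∀ i ∈ I, 0 < ∑ j ∈ I, M i j * v j) :
    (∀ i ∈ I, (∀ j, v j ≤ v i) → v i < 0) ∧
    (∀ i : Fin N, (∀ j, v j ≤ v i) → 0 ≤ v i → i ∉ I) := by
  have main : ∀ i ∈ I, (∀ j, v j ≤ v i) → v i < 0 := by
    intro i hi hmax
    by_contra h
    push_neg at h
    have hpos := hv i hi
    have hsplit : ∑ j ∈ I, M i j * v j ≤ (∑ j ∈ I, M i j) * v i := by
      rw [Finset.sum_mul]
      apply Finset.sum_le_sum
      intro j hj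
      rcases eq_or_ne j i with rfl | hne
      · exact le_rfl
      · exact mul_le_mul_of_nonneg_left (hmax j) (le_of_lt (hoff i hi j hne))
    have hcompl : ∑ j ∈ I, M i j + ∑ j ∈ Iᶜ, M i j = 0 := by
      rw [Finset.sum_add_sum_compl]; exact hrow i hi
    have hne : Iᶜ.Nonempty := by
      simpa [Finset.nonempty_iff_ne_empty, Finset.compl_eq_empty_iff] using hI
    have hcpos : 0 < ∑ j ∈ Iᶜ, M i j := by
      apply Finset.sum_pos _ hne
      intro j hj
      exact hoff i hi j (fun hji => (Finset.mem_compl.1 hj) (hji ▸ hi))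
    have hIneg : ∑ j ∈ I, M i j < 0 := by linarith
    have : (∑ j ∈ I, M i j) * v i ≤ 0 := mul_nonpos_of_nonpos_of_nonneg (le_of_lt hIneg) h
    linarith
  refine ⟨main, fun i hmax h0 hi => absurd (main i hi hmax) (not_lt.2 h0)⟩
end
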